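/- Let κ ∈ Γ₊ with κ₁ ≤ ⋯ ≤ κₙ and suppose the positive weights F₁ ≥ ⋯ ≥ Fₙ > 0 satisfy F = Σᵢ Fᵢκᵢ and the pinching κᵢ ≥ ε₀ H with H = Σᵢ κᵢ and ε₀ > 0. Then Z := F·Σᵢ κᵢ³ − (Σᵢ κᵢ²)·(Σᵢ Fᵢκᵢ²) ≥ Σ_{i<j} Fⱼ κᵢκⱼ (κᵢ − κⱼ)² ≥ ε H² Σ_{i<j} (κᵢ − κⱼ)² for some ε = ε(ε₀, min Fᵢ) > 0. -/
import Mathlib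
open Finset

lemma sum_sym {n : ℕ} (f : Fin n → Fin n → ℝ) (hdiag : ∀ i, f i i = 0) :
    ∑ i, ∑ j, f i j
      = ∑ p ∈ Finset.univ.filter (fun p : Fin n × Fin n => p.1 < p.2), (f p.1 p.2 + f p.2 p.1) := by
  have h0 : ∑ i, ∑ j, f i j = ∑ p ∈ (Finset.univ : Finset (Fin n × Fin n)), f p.1 p.2 := by
    rw [← Finset.univ_product_univ, Finset.sum_product]
  rw [h0, ← Finset.sum_filter_add_sum_filter_not Finset.univ (fun p : Fin n × Fin n => p.1 < p.2)]
  have hsub : ∑ p ∈ Finset.univ.filter (fun p : Fin n × Fin n => ¬ p.1 < p.2), f p.1 p.2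
      = ∑ p ∈ Finset.univ.filter (fun p : Fin n × Fin n => p.2 < p.1), f p.1 p.2 := by
    refine (Finset.sum_subset ?_ ?_).symm
    · intro p hp
      simp only [Finset.mem_filter, Finset.mem_univ, true_and] at hp ⊢
      exact not_lt_of_gt hp
    · intro p hp hnp
      simp only [Finset.mem_filter, Finset.mem_univ, true_and] at hp hnp
      have h : p.1 = p.2 := le_antisymm (not_lt.mp hnp) (not_lt.mp hp)
      calc f p.1 p.2 = f p.2 p.2 := by rw [h]
        _ = 0 := hdiag p.2
  have hswap : ∑ p ∈ Finset.univ.filter (fun p : Fin n × Fin n => p.2 < p.1), f p.1 p.2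
      = ∑ p ∈ Finset.univ.filter (fun p : Fin n × Fin n => p.1 < p.2), f p.2 p.1 := by
    apply Finset.sum_nbij' (fun p => Prod.swap p) (fun p => Prod.swap p) <;>
      simp [Prod.swap]
  rw [hsub, hswap, ← Finset.sum_add_distrib]

theorem pinching_Z_estimate (n : ℕ) (κ F : Fin n → ℝ) (ε₀ : ℝ) (hε₀ : 0 < ε₀)
    (hκpos : ∀ i, 0 < κ i) (hκmono : Monotone κ)
    (hFanti : Antitone F) (hFpos : ∀ i, 0 < F i)
    (hpinch : ∀ i, ε₀ * (∑ j, κ j) ≤ κ i) :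
    ∃ ε > (0 : ℝ),
      ((∑ i, F i * κ i) * (∑ i, (κ i) ^ 3)
          - (∑ i, (κ i) ^ 2) * (∑ i, F i * (κ i) ^ 2)
        ≥ ∑ p ∈ Finset.univ.filter (fun p : Fin n × Fin n => p.1 < p.2),
            F p.2 * κ p.1 * κ p.2 * (κ p.1 - κ p.2) ^ 2)
      ∧ (∑ p ∈ Finset.univ.filter (fun p : Fin n × Fin n => p.1 < p.2),
            F p.2 * κ p.1 * κ p.2 * (κ p.1 - κ p.2) ^ 2
          ≥ ε * (∑ i, κ i) ^ 2 *
            ∑ p ∈ Finset.univ.filter (fun p : Fin n × Fin n => p.1 < p.2),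
              (κ p.1 - κ p.2) ^ 2) := by
  have hZ : (∑ i, F i * κ i) * (∑ i, (κ i) ^ 3)
          - (∑ i, (κ i) ^ 2) * (∑ i, F i * (κ i) ^ 2)
        ≥ ∑ p ∈ Finset.univ.filter (fun p : Fin n × Fin n => p.1 < p.2),
            F p.2 * κ p.1 * κ p.2 * (κ p.1 - κ p.2) ^ 2 := by
    have hexp : (∑ i, F i * κ i) * (∑ i, (κ i) ^ 3)
          - (∑ i, (κ i) ^ 2) * (∑ i, F i * (κ i) ^ 2)
        = ∑ i, ∑ j, (F i * κ i * (κ j) ^ 3 - F j * (κ i) ^ 2 * (κ j) ^ 2) := by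
      rw [Finset.sum_mul_sum, Finset.sum_mul_sum]
      rw [← Finset.sum_sub_distrib]
      refine Finset.sum_congr rfl fun i _ => ?_
      rw [← Finset.sum_sub_distrib]
      refine Finset.sum_congr rfl fun j _ => ?_
      ring
    rw [hexp, sum_sym (fun i j => F i * κ i * (κ j) ^ 3 - F j * (κ i) ^ 2 * (κ j) ^ 2)
      (fun i => by ring)]
    apply Finset.sum_le_sum
    intro p hp
    simp only [Finset.mem_filter, Finset.mem_univ, true_and] at hp
    have hκle : κ p.1 ≤ κ p.2 := hκmono hp.le
    have hFle : F p.2 ≤ F p.1 := hFanti hp.le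
    have h1 := (hκpos p.1).le
    have h2 := (hκpos p.2).le
    nlinarith [mul_nonneg (mul_nonneg (mul_nonneg h1 (mul_nonneg h2 h2))
        (sub_nonneg.mpr hκle)) (sub_nonneg.mpr hFle)]
  rcases Nat.eq_zero_or_pos n with hn | hn
  · subst hn
    refine ⟨1, one_pos, hZ, ?_⟩
    simp
  · set m : Fin n := ⟨n - 1, by omega⟩ with hm
    refine ⟨ε₀ ^ 2 * F m, mul_pos (pow_pos hε₀ 2) (hFpos m), hZ, ?_⟩
    rw [ge_iff_le, mul_assoc, Finset.mul_sum, Finset.mul_sum]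
    apply Finset.sum_le_sum
    intro p hp
    simp only [Finset.mem_filter, Finset.mem_univ, true_and] at hp
    have hFm : F m ≤ F p.2 := hFanti (by simp [hm, Fin.le_def]; omega)
    have hH : 0 ≤ ∑ j, κ j := Finset.sum_nonneg fun j _ => (hκpos j).le
    have hp1 := hpinch p.1
    have hp2 := hpinch p.2
    have hεH : 0 ≤ ε₀ * ∑ j, κ j := mul_nonneg hε₀.le hH
    have hsq : 0 ≤ (κ p.1 - κ p.2) ^ 2 := sq_nonneg _
    have hFm0 := (hFpos m).le
    have key : ε₀ ^ 2 * F m * (∑ j, κ j) ^ 2 ≤ F p.2 * κ p.1 * κ p.2 := by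
      calc ε₀ ^ 2 * F m * (∑ j, κ j) ^ 2
          = F m * ((ε₀ * ∑ j, κ j) * (ε₀ * ∑ j, κ j)) := by ring
        _ ≤ F p.2 * (κ p.1 * κ p.2) := by
            apply mul_le_mul hFm (mul_le_mul hp1 hp2 hεH (hκpos p.1).le)
              (mul_nonneg hεH hεH) (hFpos p.2).le
        _ = F p.2 * κ p.1 * κ p.2 := by ring
    calc ε₀ ^ 2 * F m * ((∑ j, κ j) ^ 2 * (κ p.1 - κ p.2) ^ 2)
        = ε₀ ^ 2 * F m * (∑ j, κ j) ^ 2 * (κ p.1 - κ p.2) ^ 2 := by ring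
      _ ≤ F p.2 * κ p.1 * κ p.2 * (κ p.1 - κ p.2) ^ 2 := by
          exact mul_le_mul_of_nonneg_right key hsq
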